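/- arXiv:1406.0120 — 2 statements merged into one kernel-verified Lean document; each statement's English description precedes it below -/
import Mathlib

section
/- Let K be a number field and let K_0 be a proper subfield of K (K_0 ≠ K) such that r_1(K) + r_2(K) = r_1(K_0) + r_2(K_0). Then [K:K_0] = 2, r_1(K) = 0 (i.e. K is totally imaginary), and r_2(K_0) = 0 (i.e. K_0 is totally real). -/
open NumberField.InfinitePlace

/-- Let `K` be a number field and `K₀` a proper subfield of `K` (every subfield of `K`
contains `ℚ` since `K` has characteristic zero) such that
`r₁(K) + r₂(K) = r₁(K₀) + r₂(K₀)`. Then `[K : K₀] = 2`, `K` is totally imaginary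
(`r₁(K) = 0`) and `K₀` is totally real (`r₂(K₀) = 0`). -/
theorem eq_ranks_of_proper_subfield
    (K : Type*) [Field K] [NumberField K] (K₀ : IntermediateField ℚ K) (hne : K₀ ≠ ⊤)
    (h : nrRealPlaces K + nrComplexPlaces K = nrRealPlaces K₀ + nrComplexPlaces K₀) :
    Module.finrank K₀ K = 2 ∧ nrRealPlaces K = 0 ∧ nrComplexPlaces K₀ = 0 := by
  have h1 : nrRealPlaces K + 2 * nrComplexPlaces K = Module.finrank ℚ K :=
    card_add_two_mul_card_eq_rank K
  have h2 : nrRealPlaces K₀ + 2 * nrComplexPlaces K₀ = Module.finrank ℚ K₀ :=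
    card_add_two_mul_card_eq_rank K₀
  have htower : Module.finrank ℚ K₀ * Module.finrank K₀ K = Module.finrank ℚ K :=
    Module.finrank_mul_finrank ℚ K₀ K
  have hpos : 0 < Module.finrank ℚ K₀ := Module.finrank_pos
  have hd : 2 ≤ Module.finrank K₀ K := by
    by_contra hlt
    push_neg at hlt
    apply hne
    apply IntermediateField.eq_of_le_of_finrank_le' le_top
    rw [IntermediateField.finrank_top]
    omega
  have hd2 : Module.finrank K₀ K ≤ 2 := by
    have hle : Module.finrank ℚ K₀ * Module.finrank K₀ K ≤ Module.finrank ℚ K₀ * 2 := by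
      omega
    exact Nat.le_of_mul_le_mul_left hle hpos
  have hdeq : Module.finrank K₀ K = 2 := le_antisymm hd2 hd
  rw [hdeq] at htower
  omega
end

section
/- For every complex number τ with Im τ ≥ √3/2, setting q = e^{2πiτ}, one has |q · ∏_{n=1}^∞ (1 − q^n)^{24}| · (2·Im τ)^6 ≤ 1. In other words, the modular discriminant Δ(τ) = q·∏_{n=1}^∞(1−q^n)^{24} satisfies |Δ(τ)|·(2·Im τ)^6 ≤ 1 whenever Im τ ≥ √3/2. -/
open Complex

/-- For every `τ` in the upper half-plane with `Im τ ≥ √3/2`, the modular discriminant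
`Δ(τ) = q·∏_{n ≥ 1}(1 - q^n)^24`, where `q = e^(2πiτ)`, satisfies
`|Δ(τ)| · (2·Im τ)^6 ≤ 1`. -/
theorem abs_modular_discriminant_mul_le_one (τ : ℂ) (hτ : Real.sqrt 3 / 2 ≤ τ.im) :
    ‖Complex.exp (2 * Real.pi * I * τ) *
        ∏' n : ℕ, (1 - Complex.exp (2 * Real.pi * I * τ) ^ (n + 1)) ^ (24 : ℕ)‖ *
      (2 * τ.im) ^ (6 : ℕ) ≤ 1 := by
  set y : ℝ := τ.im with hy
  have h3 : (1.7 : ℝ) ≤ Real.sqrt 3 := by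
    rw [show (1.7 : ℝ) = Real.sqrt (1.7^2) by rw [Real.sqrt_sq]; norm_num]
    exact Real.sqrt_le_sqrt (by norm_num)
  have hy0 : (0.85 : ℝ) ≤ y := le_trans (by linarith) hτ
  have hpi : (3.14 : ℝ) ≤ Real.pi := by linarith [Real.pi_gt_d6]
  set q : ℂ := Complex.exp (2 * Real.pi * I * τ) with hq
  set r : ℝ := Real.exp (-(2 * Real.pi * y)) with hr
  have habsq : ‖q‖ = r := by
    rw [hq, Complex.norm_exp, hr]
    congr 1
    simp [Complex.mul_re, Complex.mul_im, hy]
  -- exp 5 ≥ 100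
  have hexp1 : (2.7182818283 : ℝ) ≤ Real.exp 1 := Real.exp_one_gt_d9.le
  have hexp5 : (100 : ℝ) ≤ Real.exp 5 := by
    calc (100:ℝ) ≤ 2.7182818283^5 := by norm_num
      _ ≤ (Real.exp 1)^5 := pow_le_pow_left₀ (by norm_num) hexp1 5
      _ = Real.exp 5 := by rw [← Real.exp_nat_mul]; norm_num
  have hr100 : r ≤ 1/100 := by
    have h1 : r ≤ Real.exp (-5) := by
      rw [hr]; apply Real.exp_le_exp.mpr; nlinarith
    have h2 : Real.exp (-5) ≤ 1/100 := by
      rw [Real.exp_neg]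
      rw [inv_le_comm₀ (Real.exp_pos _) (by norm_num)]
      linarith
    linarith
  have hr0 : 0 ≤ r := Real.exp_nonneg _
  have hr1 : r < 1 := by linarith
  have hqn : ∀ n : ℕ, ‖q ^ (n+1)‖ = r^(n+1) := by
    intro n; rw [norm_pow, habsq]
  have hqnr : ∀ n : ℕ, ‖q ^ (n+1)‖ ≤ r := by
    intro n; rw [hqn]; exact pow_le_of_le_one hr0 hr1.le (by omega)
  have hne : ∀ n : ℕ, (1 : ℂ) - q ^ (n+1) ≠ 0 := by
    intro n
    intro h
    have : ‖q^(n+1)‖ = 1 := by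
      have : q^(n+1) = 1 := by linear_combination -h
      simp [this]
    linarith [hqnr n]
  -- summability of complex logs
  have hlog : Summable (fun n : ℕ => Complex.log (1 - q^(n+1))) := by
    apply Summable.of_norm_bounded (g := fun n => (3/2 : ℝ) * r^(n+1))
    · exact (summable_geometric_of_lt_one hr0 hr1).mul_left _ |>.comp_injective
        (add_left_injective 1)
    · intro n
      have : (1 : ℂ) - q^(n+1) = 1 + (-(q^(n+1))) := by ring
      rw [this]
      have hb : ‖-(q^(n+1))‖ ≤ 1/2 := by
        rw [norm_neg]
        linarith [hqnr n]
      calc ‖Complex.log (1 + -(q^(n+1)))‖ ≤ 3/2 * ‖-(q^(n+1))‖ :=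
            Complex.norm_log_one_add_half_le_self hb
        _ = 3/2 * r^(n+1) := by rw [norm_neg, hqn]
  -- multipliability
  have hmul : Multipliable (fun n : ℕ => (1 : ℂ) - q^(n+1)) := by
    have := Complex.multipliable_of_summable_log hlog
    exact this
  have hmul24 : Multipliable (fun n : ℕ => ((1 : ℂ) - q^(n+1))^(24:ℕ)) := by
    have := hmul.map (powMonoidHom 24 : ℂ →* ℂ) (continuous_pow 24)
    exact this
  -- abs of the product
  have habs : ‖∏' n : ℕ, ((1:ℂ) - q^(n+1))^(24:ℕ)‖
      = ∏' n : ℕ, (‖(1:ℂ) - q^(n+1)‖)^(24:ℕ) := by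
    rw [hmul24.norm_tprod]
    congr 1; ext n; exact norm_pow _ _
  -- positivity of factors
  have hpos : ∀ n : ℕ, (0:ℝ) < (‖(1:ℂ) - q^(n+1)‖)^(24:ℕ) :=
    fun n => pow_pos (norm_pos_iff.mpr (hne n)) _
  -- real log summability
  have hlogre : Summable (fun n : ℕ => Real.log ((‖(1:ℂ) - q^(n+1)‖)^(24:ℕ))) := by
    have h1 : Summable (fun n : ℕ => (Complex.log ((1:ℂ) - q^(n+1))).re) :=
      (Complex.hasSum_re hlog.hasSum).summable
    have h2 := h1.mul_left (24 : ℝ)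
    apply h2.congr
    intro n
    rw [Real.log_pow, Complex.log_re]
    norm_num
  -- tprod = exp tsum
  have hprodeq : (∏' n : ℕ, (‖(1:ℂ) - q^(n+1)‖)^(24:ℕ))
      = Real.exp (∑' n : ℕ, Real.log ((‖(1:ℂ) - q^(n+1)‖)^(24:ℕ))) := by
    have := Real.rexp_tsum_eq_tprod hpos hlogre
    exact this.symm
  -- bound the tsum
  have hsum_le : (∑' n : ℕ, Real.log ((‖(1:ℂ) - q^(n+1)‖)^(24:ℕ))) ≤ 1/4 := by
    have hgs : Summable (fun n : ℕ => (24 * r) * r^n) :=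
      (summable_geometric_of_lt_one hr0 hr1).mul_left _
    have hle : ∀ n : ℕ, Real.log ((‖(1:ℂ) - q^(n+1)‖)^(24:ℕ)) ≤ (24 * r) * r^n := by
      intro n
      rw [Real.log_pow]
      have h1 : ‖(1:ℂ) - q^(n+1)‖ ≤ 1 + r^(n+1) := by
        calc ‖(1:ℂ) - q^(n+1)‖ ≤ ‖(1:ℂ)‖ + ‖q^(n+1)‖ :=
              norm_sub_le _ _
          _ = 1 + r^(n+1) := by rw [norm_one, hqn]
      have h2 : Real.log (‖(1:ℂ) - q^(n+1)‖) ≤ r^(n+1) := by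
        calc Real.log (‖(1:ℂ) - q^(n+1)‖) ≤ Real.log (1 + r^(n+1)) :=
              Real.log_le_log (norm_pos_iff.mpr (hne n)) h1
          _ ≤ r^(n+1) := by
              have := Real.add_one_le_exp (r^(n+1))
              rw [Real.log_le_iff_le_exp (by positivity)]
              linarith
      have : (24:ℕ) * Real.log (‖(1:ℂ) - q^(n+1)‖) ≤ 24 * r^(n+1) := by
        push_cast; nlinarith
      calc ((24:ℕ):ℝ) * Real.log (‖(1:ℂ) - q^(n+1)‖) ≤ 24 * r^(n+1) := this
        _ = (24 * r) * r^n := by ring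
    calc (∑' n : ℕ, Real.log ((‖(1:ℂ) - q^(n+1)‖)^(24:ℕ)))
        ≤ ∑' n : ℕ, (24 * r) * r^n := Summable.tsum_le_tsum hle hlogre hgs
      _ = (24 * r) * (1 - r)⁻¹ := by
          rw [tsum_mul_left, tsum_geometric_of_lt_one hr0 hr1]
      _ ≤ 1/4 := by
          rw [mul_inv_le_iff₀ (by linarith)]
          nlinarith
  -- assemble
  rw [norm_mul, habsq, habs, hprodeq]
  have hstep : r * Real.exp (∑' n : ℕ, Real.log ((‖(1:ℂ) - q^(n+1)‖)^(24:ℕ)))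
      ≤ r * Real.exp (1/4) := by
    apply mul_le_mul_of_nonneg_left (Real.exp_le_exp.mpr hsum_le) hr0
  have hy6 : y^6 ≤ Real.exp (6*y - 6) := by
    have h1 : y ≤ Real.exp (y - 1) := by linarith [Real.add_one_le_exp (y-1)]
    calc y^6 ≤ (Real.exp (y-1))^6 := pow_le_pow_left₀ (by linarith) h1 6
      _ = Real.exp (6*(y-1)) := by rw [← Real.exp_nat_mul]; norm_num
      _ = Real.exp (6*y - 6) := by ring_nf
  calc r * Real.exp (∑' n : ℕ, Real.log ((‖(1:ℂ) - q^(n+1)‖)^(24:ℕ))) * (2*y)^6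
      ≤ r * Real.exp (1/4) * (2*y)^6 := by
        apply mul_le_mul_of_nonneg_right hstep (by positivity)
    _ = 64 * (r * Real.exp (1/4) * y^6) := by ring
    _ ≤ 64 * (r * Real.exp (1/4) * Real.exp (6*y-6)) := by
        have : r * Real.exp (1/4) * y^6 ≤ r * Real.exp (1/4) * Real.exp (6*y-6) := by
          apply mul_le_mul_of_nonneg_left hy6 (by positivity)
        linarith
    _ = 64 * Real.exp (-(2*Real.pi*y) + 1/4 + (6*y - 6)) := by
        rw [hr, ← Real.exp_add, ← Real.exp_add]
    _ ≤ 64 * Real.exp (-(23/4 : ℝ)) := by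
        apply mul_le_mul_of_nonneg_left (Real.exp_le_exp.mpr ?_) (by norm_num)
        nlinarith
    _ ≤ 1 := by
        rw [Real.exp_neg]
        rw [mul_inv_le_iff₀ (Real.exp_pos _)]
        have : Real.exp 5 ≤ Real.exp (23/4) := Real.exp_le_exp.mpr (by norm_num)
        linarith
end
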